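/- A G-graded commutative ring R is a Gelfand graded ring if and only if for every a ∈ R_e there exist b, c ∈ R_e such that (1 − ba)(1 − c(1 − a)) = 0. -/

import Mathlib

section GradedGelfand

variable {G : Type*} [AddGroup G] [DecidableEq G] {R : Type*} [CommRing R]
variable (𝒜 : G → AddSubgroup R) [GradedRing 𝒜]

/-- A homogeneous (graded) prime ideal: a proper graded ideal that is prime
with respect to homogeneous elements. -/
def IsGradedPrime (P : Ideal R) : Prop :=
  P.IsHomogeneous 𝒜 ∧ P ≠ ⊤ ∧
    ∀ a b : R, SetLike.IsHomogeneousElem 𝒜 a → SetLike.IsHomogeneousElem 𝒜 b →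
      a * b ∈ P → a ∈ P ∨ b ∈ P

/-- A graded maximal ideal: a proper graded ideal maximal among proper graded ideals. -/
def IsGradedMaximal (M : Ideal R) : Prop :=
  M.IsHomogeneous 𝒜 ∧ M ≠ ⊤ ∧
    ∀ J : Ideal R, J.IsHomogeneous 𝒜 → M ≤ J → J ≠ ⊤ → J = M

/-- The homogeneous prime spectrum of a graded ring. -/
def GSpec := { P : Ideal R // IsGradedPrime 𝒜 P }

/-- The Zariski topology on the homogeneous prime spectrum, generated by the basic
open sets `D_G(r)` for homogeneous `r`; the closed sets are exactly the `V_G(I)`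
for graded ideals `I`. -/
instance : TopologicalSpace (GSpec 𝒜) :=
  TopologicalSpace.generateFrom
    { U | ∃ r : R, SetLike.IsHomogeneousElem 𝒜 r ∧ U = { P : GSpec 𝒜 | r ∉ P.1 } }

/-- The set of graded maximal ideals inside the homogeneous prime spectrum. -/
def GMax : Set (GSpec 𝒜) := { P | IsGradedMaximal 𝒜 P.1 }

/-- A Gelfand graded ring: every homogeneous prime ideal is contained in a unique
graded maximal ideal. -/
def IsGelfandGraded : Prop :=
  ∀ P : Ideal R, IsGradedPrime 𝒜 P →
    ∃! M : Ideal R, IsGradedMaximal 𝒜 M ∧ P ≤ M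

/-- A pm⁺ graded ring: for every homogeneous prime `P`, the homogeneous primes
containing `P` form a chain. -/
def IsPMPlusGraded : Prop :=
  ∀ P Q Q' : Ideal R, IsGradedPrime 𝒜 P → IsGradedPrime 𝒜 Q → IsGradedPrime 𝒜 Q' →
    P ≤ Q → P ≤ Q' → Q ≤ Q' ∨ Q' ≤ Q

end GradedGelfand

section Aux2
variable {G : Type*} [AddGroup G] [DecidableEq G] {R : Type*} [CommRing R]
variable (𝒜 : G → AddSubgroup R) [GradedRing 𝒜]

lemma mem0_mul {a b : R} (ha : a ∈ 𝒜 0) (hb : b ∈ 𝒜 0) : a * b ∈ 𝒜 0 := by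
  simpa using SetLike.mul_mem_graded ha hb

lemma one_mem0 : (1 : R) ∈ 𝒜 0 := SetLike.one_mem_graded 𝒜

lemma decompose_zero_add (x y : R) :
    (DirectSum.decompose 𝒜 (x + y) 0 : R)
      = (DirectSum.decompose 𝒜 x 0 : R) + (DirectSum.decompose 𝒜 y 0 : R) := by
  simp

lemma decompose_zero_mul_right {a : R} (r : R) (ha : a ∈ 𝒜 0) :
    (DirectSum.decompose 𝒜 (r * a) 0 : R) = (DirectSum.decompose 𝒜 r 0 : R) * a := by
  have := DirectSum.coe_decompose_mul_add_of_right_mem 𝒜 (a := r) (i := 0) ha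
  rwa [zero_add] at this

lemma exists_gradedMax_ge {I : Ideal R} (hI : I.IsHomogeneous 𝒜) (hItop : I ≠ ⊤) :
    ∃ M : Ideal R, IsGradedMaximal 𝒜 M ∧ I ≤ M := by
  obtain ⟨M, hIM, ⟨hMhom, hMtop⟩, hMmax⟩ := zorn_le_nonempty₀
    {J : Ideal R | J.IsHomogeneous 𝒜 ∧ J ≠ ⊤}
    (fun c hcs hc y hy => by
      refine ⟨sSup c, ⟨Ideal.IsHomogeneous.sSup (fun J hJ => (hcs hJ).1), ?_⟩,
        fun z hz => le_sSup hz⟩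
      intro htop
      have h1 : (1 : R) ∈ sSup c := htop ▸ Submodule.mem_top
      obtain ⟨J, hJc, hJ1⟩ := (Submodule.mem_sSup_of_directed ⟨y, hy⟩ hc.directedOn).mp h1
      exact (hcs hJc).2 (Ideal.eq_top_of_isUnit_mem _ hJ1 isUnit_one))
    I ⟨hI, hItop⟩
  exact ⟨M, ⟨hMhom, hMtop, fun J hJhom hMJ hJtop =>
    le_antisymm (hMmax ⟨hJhom, hJtop⟩ hMJ) hMJ⟩, hIM⟩

lemma exists_gradedPrime_disjoint (S : Set R)
    (hmul : ∀ s ∈ S, ∀ t ∈ S, s * t ∈ S) (h1 : (1 : R) ∈ S) (h0 : (0 : R) ∉ S) :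
    ∃ P : Ideal R, IsGradedPrime 𝒜 P ∧ ∀ s ∈ S, s ∉ P := by
  obtain ⟨P, -, ⟨hPhom, hPdisj⟩, hPmax⟩ := zorn_le_nonempty₀
    {J : Ideal R | J.IsHomogeneous 𝒜 ∧ ∀ s ∈ S, s ∉ J}
    (fun c hcs hc y hy => by
      refine ⟨sSup c, ⟨Ideal.IsHomogeneous.sSup (fun J hJ => (hcs hJ).1), ?_⟩,
        fun z hz => le_sSup hz⟩
      intro s hs hsSup
      obtain ⟨J, hJc, hJs⟩ := (Submodule.mem_sSup_of_directed ⟨y, hy⟩ hc.directedOn).mp hsSup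
      exact (hcs hJc).2 s hs hJs)
    ⊥ ⟨Ideal.IsHomogeneous.bot 𝒜, fun s hs hsbot => h0 (by
        rw [Ideal.mem_bot] at hsbot; exact hsbot ▸ hs)⟩
  have hPtop : P ≠ ⊤ := fun h => hPdisj 1 h1 (h ▸ Submodule.mem_top)
  refine ⟨P, ⟨hPhom, hPtop, fun a b ha hb hab => ?_⟩, hPdisj⟩
  by_contra hor
  push_neg at hor
  obtain ⟨haP, hbP⟩ := hor
  have key : ∀ x : R, SetLike.IsHomogeneousElem 𝒜 x → x ∉ P →
      ∃ s ∈ S, s ∈ P ⊔ Ideal.span {x} := by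
    intro x hx hxP
    by_contra hno
    push_neg at hno
    have hmem : (P ⊔ Ideal.span {x} : Ideal R) ∈
        {J : Ideal R | J.IsHomogeneous 𝒜 ∧ ∀ s ∈ S, s ∉ J} :=
      ⟨Ideal.IsHomogeneous.sup hPhom
        (Ideal.homogeneous_span 𝒜 {x} (by rintro y rfl; exact hx)),
       fun s hs => hno s hs⟩
    have := hPmax hmem le_sup_left
    exact hxP (this (Submodule.mem_sup_right (Ideal.subset_span rfl)))
  obtain ⟨s, hsS, hs⟩ := key a ha haP
  obtain ⟨t, htS, ht⟩ := key b hb hbP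
  obtain ⟨p, hp, u, hu, hpu⟩ := Submodule.mem_sup.mp hs
  obtain ⟨q, hq, v, hv, hqv⟩ := Submodule.mem_sup.mp ht
  obtain ⟨r, hr⟩ := Ideal.mem_span_singleton'.mp hu
  obtain ⟨r', hr'⟩ := Ideal.mem_span_singleton'.mp hv
  have hst : s * t ∈ P := by
    have : s * t = p * q + p * (r' * b) + (r * a) * q + (r * r') * (a * b) := by
      rw [← hpu, ← hqv, ← hr, ← hr']; ring
    rw [this]
    exact P.add_mem (P.add_mem (P.add_mem (P.mul_mem_right _ hp) (P.mul_mem_right _ hp))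
      (P.mul_mem_left _ hq)) (P.mul_mem_left _ hab)
  exact hPdisj (s * t) (hmul s hsS t htS) hst

end Aux2

section Statements

variable {G : Type*} [AddGroup G] [DecidableEq G] {R : Type*} [CommRing R]
variable (𝒜 : G → AddSubgroup R) [GradedRing 𝒜]

theorem stmt_11 : IsGelfandGraded 𝒜 ↔
    ∀ a : R, a ∈ 𝒜 0 → ∃ b c : R, b ∈ 𝒜 0 ∧ c ∈ 𝒜 0 ∧
      (1 - b * a) * (1 - c * (1 - a)) = 0 := by
  constructor
  · -- Gelfand ⇒ element condition
    intro hGel a ha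
    by_contra hcon
    push_neg at hcon
    have ha' : (1 : R) - a ∈ 𝒜 0 := (𝒜 0).sub_mem (one_mem0 𝒜) ha
    set S : Set R :=
      {x | ∃ b c : R, b ∈ 𝒜 0 ∧ c ∈ 𝒜 0 ∧ x = (1 - b * a) * (1 - c * (1 - a))} with hSdef
    obtain ⟨P, hP, hPdisj⟩ := exists_gradedPrime_disjoint 𝒜 S
      (by
        rintro s ⟨b, c, hb, hc, rfl⟩ t ⟨b', c', hb', hc', rfl⟩
        refine ⟨b + b' - b * b' * a, c + c' - c * c' * (1 - a), ?_, ?_, by ring⟩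
        · exact (𝒜 0).sub_mem ((𝒜 0).add_mem hb hb')
            (mem0_mul 𝒜 (mem0_mul 𝒜 hb hb') ha)
        · exact (𝒜 0).sub_mem ((𝒜 0).add_mem hc hc')
            (mem0_mul 𝒜 (mem0_mul 𝒜 hc hc') ha'))
      ⟨0, 0, (𝒜 0).zero_mem, (𝒜 0).zero_mem, by ring⟩
      (by rintro ⟨b, c, hb, hc, h⟩; exact hcon b c hb hc h.symm)
    have hproper : ∀ x : R, x ∈ 𝒜 0 → (∀ r : R, r ∈ 𝒜 0 → (1 - r * x) ∈ S) →
        ∃ M : Ideal R, IsGradedMaximal 𝒜 M ∧ P ≤ M ∧ x ∈ M := by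
      intro x hx hxS
      have hJhom : (P ⊔ Ideal.span {x}).IsHomogeneous 𝒜 :=
        Ideal.IsHomogeneous.sup hP.1
          (Ideal.homogeneous_span 𝒜 {x} (by rintro y rfl; exact ⟨0, hx⟩))
      have hJtop : P ⊔ Ideal.span {x} ≠ ⊤ := by
        intro htop
        have h1 : (1 : R) ∈ P ⊔ Ideal.span {x} := htop ▸ Submodule.mem_top
        obtain ⟨p, hp, u, hu, hpu⟩ := Submodule.mem_sup.mp h1
        obtain ⟨r, hr⟩ := Ideal.mem_span_singleton'.mp hu
        have e1 : (DirectSum.decompose 𝒜 (p + u) 0 : R) = 1 := by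
          rw [hpu]; exact DirectSum.decompose_of_mem_same 𝒜 (one_mem0 𝒜)
        rw [decompose_zero_add, ← hr, decompose_zero_mul_right 𝒜 r hx] at e1
        have hpP : ((DirectSum.decompose 𝒜 p 0 : R)) ∈ P := hP.1 0 hp
        have hmem : (1 : R) - (DirectSum.decompose 𝒜 r 0 : R) * x ∈ P := by
          have : (1 : R) - (DirectSum.decompose 𝒜 r 0 : R) * x
              = (DirectSum.decompose 𝒜 p 0 : R) := by rw [← e1]; ring
          rw [this]; exact hpP
        exact hPdisj _ (hxS _ (SetLike.coe_mem _)) hmem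
      obtain ⟨M, hM, hJM⟩ := exists_gradedMax_ge 𝒜 hJhom hJtop
      exact ⟨M, hM, le_trans le_sup_left hJM,
        hJM (Submodule.mem_sup_right (Ideal.subset_span rfl))⟩
    obtain ⟨M, hM, hPM, haM⟩ := hproper a ha
      (fun r hr => ⟨r, 0, hr, (𝒜 0).zero_mem, by ring⟩)
    obtain ⟨N, hN, hPN, haN⟩ := hproper (1 - a) ha'
      (fun r hr => ⟨0, r, (𝒜 0).zero_mem, hr, by ring⟩)
    obtain ⟨M₀, -, huniq⟩ := hGel P hP
    have hMN : M = N := by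
      rw [huniq M ⟨hM, hPM⟩, huniq N ⟨hN, hPN⟩]
    have h1M : (1 : R) ∈ M := by
      have := M.add_mem haM (hMN ▸ haN)
      simpa using this
    exact hM.2.1 ((Ideal.eq_top_iff_one M).mpr h1M)
  · -- element condition ⇒ Gelfand
    intro hyp P hP
    obtain ⟨M, hM, hPM⟩ := exists_gradedMax_ge 𝒜 hP.1 hP.2.1
    refine ⟨M, ⟨hM, hPM⟩, ?_⟩
    rintro N ⟨hN, hPN⟩
    by_contra hne
    have hsup : N ⊔ M = ⊤ := by
      by_contra h
      have heq : N ⊔ M = N :=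
        hN.2.2 (N ⊔ M) (Ideal.IsHomogeneous.sup hN.1 hM.1) le_sup_left h
      exact hne (hM.2.2 N hN.1 (heq ▸ (le_sup_right : M ≤ N ⊔ M)) hN.2.1)
    have h1 : (1 : R) ∈ N ⊔ M := hsup ▸ Submodule.mem_top
    obtain ⟨n, hn, m, hm, hnm⟩ := Submodule.mem_sup.mp h1
    set a : R := (DirectSum.decompose 𝒜 n 0 : R) with hadef
    have haN : a ∈ N := hN.1 0 hn
    have ha0 : a ∈ 𝒜 0 := SetLike.coe_mem _
    have hmM : (DirectSum.decompose 𝒜 m 0 : R) ∈ M := hM.1 0 hm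
    have e1 : a + (DirectSum.decompose 𝒜 m 0 : R) = 1 := by
      rw [hadef, ← decompose_zero_add, hnm]
      exact DirectSum.decompose_of_mem_same 𝒜 (one_mem0 𝒜)
    have h1aM : (1 : R) - a ∈ M := by
      have : (1 : R) - a = (DirectSum.decompose 𝒜 m 0 : R) := by rw [← e1]; ring
      rw [this]; exact hmM
    obtain ⟨b, c, hb, hc, heq⟩ := hyp a ha0
    have ha' : (1 : R) - a ∈ 𝒜 0 := (𝒜 0).sub_mem (one_mem0 𝒜) ha0
    have hfac := hP.2.2 (1 - b * a) (1 - c * (1 - a))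
      ⟨0, (𝒜 0).sub_mem (one_mem0 𝒜) (mem0_mul 𝒜 hb ha0)⟩
      ⟨0, (𝒜 0).sub_mem (one_mem0 𝒜) (mem0_mul 𝒜 hc ha')⟩
      (by rw [heq]; exact P.zero_mem)
    rcases hfac with hf | hf
    · have h1N : (1 : R) ∈ N := by
        have := N.add_mem (hPN hf) (N.mul_mem_left b haN)
        simpa using this
      exact hN.2.1 ((Ideal.eq_top_iff_one N).mpr h1N)
    · have h1M : (1 : R) ∈ M := by
        have := M.add_mem (hPM hf) (M.mul_mem_left c h1aM)
        simpa using this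
      exact hM.2.1 ((Ideal.eq_top_iff_one M).mpr h1M)

end Statements
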